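/- Let E : [a,b] → ℝ be an excursion of length l = b − a > 0. Then there exists a sub-excursion of E of length l' with l/2 ≤ l' < l. -/

import Mathlib

/-- An excursion: a continuous map `E` on `[a,b]` with `E a = E b` and `E a` the minimum. -/
def IsExcursion (E : ℝ → ℝ) (a b : ℝ) : Prop :=
  a ≤ b ∧ ContinuousOn E (Set.Icc a b) ∧ E a = E b ∧ ∀ t ∈ Set.Icc a b, E a ≤ E t

/-- Last crossing: if `f p ≤ μ ≤ f q`, there is a last point `c` with `f c = μ`,
after which `f ≥ μ`. -/
lemma lastCross (f : ℝ → ℝ) (p q μ : ℝ) (hpq : p ≤ q)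
    (hf : ContinuousOn f (Set.Icc p q)) (hp : f p ≤ μ) (hq : μ ≤ f q) :
    ∃ c ∈ Set.Icc p q, f c = μ ∧ ∀ t ∈ Set.Icc c q, μ ≤ f t := by
  set S : Set ℝ := {t ∈ Set.Icc p q | f t ≤ μ} with hS
  have hS_closed : IsClosed S :=
    hf.preimage_isClosed_of_isClosed isClosed_Icc isClosed_Iic
  have hS_cpt : IsCompact S :=
    isCompact_Icc.of_isClosed_subset hS_closed (fun t ht => ht.1)
  have hne : S.Nonempty := ⟨p, ⟨le_refl p, hpq⟩, hp⟩
  have hc := hS_cpt.sSup_mem hne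
  set c := sSup S with hcdef
  have hmemIcc : c ∈ Set.Icc p q := hc.1
  have hle : f c ≤ μ := hc.2
  have hgt : ∀ t ∈ Set.Ioc c q, μ ≤ f t := by
    intro t ht
    by_contra h
    push_neg at h
    have htS : t ∈ S := ⟨⟨hmemIcc.1.trans ht.1.le, ht.2⟩, h.le⟩
    have := le_csSup hS_cpt.bddAbove htS
    linarith [ht.1]
  have hfc : f c = μ := by
    rcases eq_or_lt_of_le hmemIcc.2 with hcq | hcq
    · refine le_antisymm hle ?_
      rw [hcq]; exact hq
    · refine le_antisymm hle ?_
      have hsub : Set.Ioc c q ⊆ Set.Icc p q := fun t ht =>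
        ⟨hmemIcc.1.trans ht.1.le, ht.2⟩
      have hcont : ContinuousWithinAt f (Set.Ioc c q) c :=
        (hf c hmemIcc).mono hsub
      have hne' : (nhdsWithin c (Set.Ioc c q)).NeBot := by
        rw [nhdsWithin_Ioc_eq_nhdsGT hcq]; exact nhdsGT_neBot c
      exact ge_of_tendsto hcont
        (Filter.eventually_of_mem self_mem_nhdsWithin fun t ht => hgt t ht)
  refine ⟨c, hmemIcc, hfc, ?_⟩
  intro t ht
  rcases eq_or_lt_of_le ht.1 with h | h
  · rw [← h, hfc]
  · exact hgt t ⟨h, ht.2⟩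

/-- First crossing: if `f q ≤ μ ≤ f p`, there is a first point `d` with `f d = μ`,
before which `f ≥ μ`. -/
lemma firstCross (f : ℝ → ℝ) (p q μ : ℝ) (hpq : p ≤ q)
    (hf : ContinuousOn f (Set.Icc p q)) (hp : μ ≤ f p) (hq : f q ≤ μ) :
    ∃ d ∈ Set.Icc p q, f d = μ ∧ ∀ t ∈ Set.Icc p d, μ ≤ f t := by
  set S : Set ℝ := {t ∈ Set.Icc p q | f t ≤ μ} with hS
  have hS_closed : IsClosed S :=
    hf.preimage_isClosed_of_isClosed isClosed_Icc isClosed_Iic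
  have hS_cpt : IsCompact S :=
    isCompact_Icc.of_isClosed_subset hS_closed (fun t ht => ht.1)
  have hne : S.Nonempty := ⟨q, ⟨hpq, le_refl q⟩, hq⟩
  have hc := hS_cpt.sInf_mem hne
  set d := sInf S with hddef
  have hmemIcc : d ∈ Set.Icc p q := hc.1
  have hle : f d ≤ μ := hc.2
  have hgt : ∀ t ∈ Set.Ico p d, μ ≤ f t := by
    intro t ht
    by_contra h
    push_neg at h
    have htS : t ∈ S := ⟨⟨ht.1, ht.2.le.trans hmemIcc.2⟩, h.le⟩
    have := csInf_le hS_cpt.bddBelow htS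
    linarith [ht.2]
  have hfd : f d = μ := by
    rcases eq_or_lt_of_le hmemIcc.1 with hpd | hpd
    · refine le_antisymm hle ?_
      rw [← hpd]; exact hp
    · refine le_antisymm hle ?_
      have hsub : Set.Ico p d ⊆ Set.Icc p q := fun t ht =>
        ⟨ht.1, ht.2.le.trans hmemIcc.2⟩
      have hcont : ContinuousWithinAt f (Set.Ico p d) d :=
        (hf d hmemIcc).mono hsub
      have hne' : (nhdsWithin d (Set.Ico p d)).NeBot := by
        rw [nhdsWithin_Ico_eq_nhdsLT hpd]; exact nhdsLT_neBot d
      exact ge_of_tendsto hcont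
        (Filter.eventually_of_mem self_mem_nhdsWithin fun t ht => hgt t ht)
  refine ⟨d, hmemIcc, hfd, ?_⟩
  intro t ht
  rcases eq_or_lt_of_le ht.2 with h | h
  · rw [h, hfd]
  · exact hgt t ⟨ht.1, h⟩

/-- An excursion of length `l = b − a > 0` has a sub-excursion of length `l'` with
`l/2 ≤ l' < l`. -/
theorem stmt_13 (E : ℝ → ℝ) (a b : ℝ) (hE : IsExcursion E a b) (hab : a < b) :
    ∃ c d : ℝ, a ≤ c ∧ c ≤ d ∧ d ≤ b ∧ IsExcursion E c d ∧
      (b - a) / 2 ≤ d - c ∧ d - c < b - a := by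
  obtain ⟨hab', hcont, hEab, hmin⟩ := hE
  set m4 : ℝ := a + (b - a) / 4 with hm4
  set m4' : ℝ := b - (b - a) / 4 with hm4'
  have hm4m4' : m4 ≤ m4' := by simp only [hm4, hm4']; linarith
  have ham4 : a < m4 := by simp only [hm4]; linarith
  have hm4'b : m4' < b := by simp only [hm4']; linarith
  have hJsub : Set.Icc m4 m4' ⊆ Set.Icc a b := Set.Icc_subset_Icc ham4.le hm4'b.le
  by_cases hcase : ∃ t0 ∈ Set.Icc m4 m4', E t0 = E a
  · -- Case A: E returns to its minimum value in the middle half.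
    obtain ⟨t0, ht0, hEt0⟩ := hcase
    rcases le_total ((a + b) / 2) t0 with h | h
    · -- take [a, t0]
      refine ⟨a, t0, le_refl a, ?_, ?_, ⟨?_, ?_, ?_, ?_⟩, ?_, ?_⟩
      · linarith [ht0.1, ham4]
      · linarith [ht0.2, hm4'b]
      · linarith [ht0.1, ham4]
      · exact hcont.mono (Set.Icc_subset_Icc (le_refl a) (by linarith [ht0.2, hm4'b]))
      · exact hEt0.symm
      · intro t ht
        exact hmin t ⟨ht.1, ht.2.trans (by linarith [ht0.2, hm4'b])⟩
      · linarith
      · linarith [ht0.2, hm4'b]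
    · -- take [t0, b]
      refine ⟨t0, b, ?_, ?_, le_refl b, ⟨?_, ?_, ?_, ?_⟩, ?_, ?_⟩
      · linarith [ht0.1, ham4]
      · linarith [ht0.2, hm4'b]
      · linarith [ht0.2, hm4'b]
      · exact hcont.mono (Set.Icc_subset_Icc (by linarith [ht0.1, ham4]) (le_refl b))
      · rw [hEt0, hEab]
      · intro t ht
        rw [hEt0]
        exact hmin t ⟨(by linarith [ht0.1, ham4] : a ≤ t0).trans ht.1, ht.2⟩
      · linarith
      · linarith [ht0.1, ham4]
  · -- Case B: E > E a on the middle half. Take the min there and cross.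
    push_neg at hcase
    have hJne : (Set.Icc m4 m4').Nonempty := ⟨m4, le_refl m4, hm4m4'⟩
    obtain ⟨t0, ht0, hmin0⟩ :=
      isCompact_Icc.exists_isMinOn hJne (hcont.mono hJsub)
    set μ : ℝ := E t0 with hμ
    have hμgt : E a < μ := by
      have h1 : E a ≤ E t0 := hmin t0 (hJsub ht0)
      have h2 : E t0 ≠ E a := hcase t0 ht0
      exact lt_of_le_of_ne h1 (Ne.symm h2)
    -- last crossing on [a, m4]
    obtain ⟨c, hcmem, hEc, hcprop⟩ :=
      lastCross E a m4 μ ham4.le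
        (hcont.mono (Set.Icc_subset_Icc (le_refl a) (by linarith)))
        hμgt.le (hmin0 ⟨le_refl m4, hm4m4'⟩)
    -- first crossing on [m4', b]
    obtain ⟨d, hdmem, hEd, hdprop⟩ :=
      firstCross E m4' b μ hm4'b.le
        (hcont.mono (Set.Icc_subset_Icc (by linarith) (le_refl b)))
        (hmin0 ⟨hm4m4', le_refl m4'⟩) (by rw [← hEab]; exact hμgt.le)
    have hca : a < c := by
      rcases eq_or_lt_of_le hcmem.1 with h | h
      · exfalso; rw [← h] at hEc; linarith
      · exact h
    have hcd : c ≤ d := hcmem.2.trans (hm4m4'.trans hdmem.1)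
    refine ⟨c, d, hca.le, hcd, hdmem.2, ⟨hcd, ?_, ?_, ?_⟩, ?_, ?_⟩
    · exact hcont.mono (Set.Icc_subset_Icc hca.le hdmem.2)
    · rw [hEc, hEd]
    · intro t ht
      rw [hEc]
      rcases le_total t m4 with h1 | h1
      · exact hcprop t ⟨ht.1, h1⟩
      · rcases le_total t m4' with h2 | h2
        · exact hmin0 ⟨h1, h2⟩
        · exact hdprop t ⟨h2, ht.2⟩
    · have := hcmem.2
      have := hdmem.1
      simp only [hm4, hm4'] at *
      linarith
    · linarith [hdmem.2]
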